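/- Let a, b be real numbers, and let M be the 3×3 real matrix whose rows are (1+a, 1+a, 1+a), (1−b, 1−b, 1−b), (b−a, b−a, b−a). If (1+a)(1−b)(b−a) ≠ 0, (1+a)(1−b)(2+a−b) > 0 and (b−a)(2+a−b) > 0, then the evolution algebra E_M is isomorphic to the evolution algebra E₇ whose structure matrix has rows (1,0,0), (1,0,0), (1,0,0). -/

import Mathlib

/-- Evolution algebra multiplication on ℝ³ determined by a structure matrix `A`:
`(x ∗_A y) j = ∑ i, x i * y i * A i j`. -/
def evolMul (A : Matrix (Fin 3) (Fin 3) ℝ) (x y : Fin 3 → ℝ) : Fin 3 → ℝ :=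
  fun j => ∑ i, x i * y i * A i j

/-- The evolution algebras with structure matrices `A` and `B` are isomorphic:
there is an ℝ-linear equivalence of ℝ³ intertwining the two multiplications. -/
def EvolIso (A B : Matrix (Fin 3) (Fin 3) ℝ) : Prop :=
  ∃ f : (Fin 3 → ℝ) ≃ₗ[ℝ] (Fin 3 → ℝ),
    ∀ x y, f (evolMul A x y) = evolMul B (f x) (f y)

set_option maxHeartbeats 2000000 in
lemma aux (α β γ : ℝ) (hα : 0 < α) (hβ : 0 < β) (hγ : 0 < γ)
    (hsum : α + β + γ = 2) :
    EvolIso (!![α, α, α; β, β, β; γ, γ, γ]) (!![1, 0, 0; 1, 0, 0; 1, 0, 0]) := by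
  have hs0 : (0:ℝ) < β + γ := by positivity
  set c : ℝ := Real.sqrt (α / (β + γ)) with hcdef
  set d : ℝ := Real.sqrt (2 * β * γ / (β + γ)) with hddef
  have hc0 : 0 < c := Real.sqrt_pos.mpr (by positivity)
  have hd0 : 0 < d := Real.sqrt_pos.mpr (by positivity)
  have hc : (β + γ) * c ^ 2 = α := by
    rw [hcdef, Real.sq_sqrt (by positivity)]; field_simp
  have hd : (β + γ) * d ^ 2 = 2 * β * γ := by
    rw [hddef, Real.sq_sqrt (by positivity)]; field_simp
  refine ⟨{ toFun := fun x => ![α * x 0 + β * x 1 + γ * x 2,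
              c * ((β + γ) * x 0 - β * x 1 - γ * x 2),
              d * (x 1 - x 2)]
            map_add' := ?_
            map_smul' := ?_
            invFun := fun y => ![y 0 / 2 + y 1 / (2 * c),
              y 0 / 2 - c * y 1 / 2 + γ * y 2 / ((β + γ) * d),
              y 0 / 2 - c * y 1 / 2 - β * y 2 / ((β + γ) * d)]
            left_inv := ?_
            right_inv := ?_ }, ?_⟩
  · intro x y
    funext j
    fin_cases j <;> simp <;> ring
  · intro t x
    funext j
    fin_cases j <;> simp <;> ring
  · intro x
    funext j
    fin_cases j <;> simp
    · field_simp
      linear_combination (x 0) * hsum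
    · field_simp
      linear_combination (-(x 0 * (β + γ) - β * x 1 - γ * x 2)) * hc + (β * x 1 + γ * x 2) * hsum
    · field_simp
      linear_combination (-(x 0 * (β + γ) - β * x 1 - γ * x 2)) * hc + (β * x 1 + γ * x 2) * hsum
  · intro y
    funext j
    fin_cases j <;> simp
    · field_simp
      linear_combination ((β + γ) * d * c * y 0) * hsum - ((β + γ) * d * y 1) * hc
    · field_simp
      linear_combination ((β + γ) * d * y 1) * hc + ((β + γ) * d * y 1) * hsum
    · field_simp
      ring
  · intro x y
    funext j
    fin_cases j <;> simp [evolMul, Fin.sum_univ_three]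
    · refine mul_left_cancel₀ (show (β + γ:ℝ) ≠ 0 from ne_of_gt hs0) ?_
      linear_combination ((-1)*(γ)^2*(x 2)*(y 2) + (1)*(γ)^2*(x 2)*(y 0) + (1)*(γ)^2*(x 0)*(y 2) + (-1)*(γ)^2*(x 0)*(y 0) + (-1)*(β)*(γ)*(x 2)*(y 1) + (1)*(β)*(γ)*(x 2)*(y 0) + (-1)*(β)*(γ)*(x 1)*(y 2) + (1)*(β)*(γ)*(x 1)*(y 0) + (1)*(β)*(γ)*(x 0)*(y 2) + (1)*(β)*(γ)*(x 0)*(y 1) + (-2)*(β)*(γ)*(x 0)*(y 0) + (-1)*(β)^2*(x 1)*(y 1) + (1)*(β)^2*(x 1)*(y 0) + (1)*(β)^2*(x 0)*(y 1) + (-1)*(β)^2*(x 0)*(y 0)) * hc + ((-1)*(x 2)*(y 2) + (1)*(x 2)*(y 1) + (1)*(x 1)*(y 2) + (-1)*(x 1)*(y 1)) * hd + ((1)*(β)*(γ)*(x 2)*(y 2) + (-1)*(β)*(γ)*(x 2)*(y 1) + (-1)*(β)*(γ)*(x 1)*(y 2) + (1)*(β)*(γ)*(x 1)*(y 1)) *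 hsum
    · right
      ring

theorem stmt (a b : ℝ)
    (h1 : (1 + a) * (1 - b) * (b - a) ≠ 0)
    (h2 : (1 + a) * (1 - b) * (2 + a - b) > 0)
    (h3 : (b - a) * (2 + a - b) > 0) :
    EvolIso (!![1 + a, 1 + a, 1 + a; 1 - b, 1 - b, 1 - b; b - a, b - a, b - a] : Matrix (Fin 3) (Fin 3) ℝ) (!![1, 0, 0; 1, 0, 0; 1, 0, 0] : Matrix (Fin 3) (Fin 3) ℝ) := by
  have hAB : 0 < (1 + a) + (1 - b) := by nlinarith [h3]
  have hC : 0 < b - a := by nlinarith [h3, hAB]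
  have hprod : 0 < (1 + a) * (1 - b) := by nlinarith [h2, hAB]
  have hA : 0 < 1 + a := by nlinarith [hprod, hAB]
  have hB : 0 < 1 - b := by nlinarith [hprod, hA]
  exact aux (1 + a) (1 - b) (b - a) hA hB hC (by ring)
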